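/- Let Q be a finitely generated (possibly noncommutative, associative, unital) ring and Q₀ ⊆ Q a subring of finite additive index. Then Q₀ contains a two-sided ideal J of Q which has finite additive index in Q (hence in Q₀). -/

import Mathlib

/-- If membership in the coset of `K` is detected by a function into a finite type,
then `K` has finite index. -/
lemma lewin_aux_index_ne_zero {G V : Type} [AddCommGroup G] [Finite V]
    (K : AddSubgroup G) (f : G → V)
    (h : ∀ x y : G, x - y ∈ K ↔ f x = f y) : K.index ≠ 0 := by
  let F : G ⧸ K → V := fun q => Quotient.liftOn' q f (fun a b hab => by
    have hab' : -a + b ∈ K := QuotientAddGroup.leftRel_apply.mp hab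
    have hsub : a - b ∈ K := by
      have := K.neg_mem hab'
      rwa [show -(-a + b) = a - b by abel] at this
    exact (h a b).mp hsub)
  have hinj : Function.Injective F := by
    intro a b hab
    induction a using Quotient.inductionOn'
    induction b using Quotient.inductionOn'
    rename_i x y
    have hfxy : f x = f y := hab
    have hxy : x - y ∈ K := (h x y).mpr hfxy
    refine Quotient.sound' (QuotientAddGroup.leftRel_apply.mpr ?_)
    have := K.neg_mem hxy
    rwa [show -(x - y) = -x + y by abel] at this
  have : Finite (G ⧸ K) := Finite.of_injective F hinj
  rw [AddSubgroup.index_eq_card]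
  exact Nat.card_ne_zero.mpr ⟨⟨(0 : G)⟩, this⟩

/-- Lewin's lemma: in a finitely generated (possibly noncommutative) unital ring `Q`,
every subring `Q₀` of finite additive index contains a two-sided ideal of `Q` of finite
additive index. -/
theorem lewin_ideal_of_finite_index_subring
    {Q : Type} [Ring Q]
    (hfg : ∃ s : Finset Q, Subring.closure (↑s : Set Q) = ⊤)
    (Q₀ : Subring Q) (hQ₀ : Q₀.toAddSubgroup.index ≠ 0) :
    ∃ J : AddSubgroup Q, (↑J : Set Q) ⊆ (↑Q₀ : Set Q) ∧
      (∀ q : Q, ∀ x ∈ J, q * x ∈ J ∧ x * q ∈ J) ∧ J.index ≠ 0 := by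
  classical
  obtain ⟨s, hs⟩ := hfg
  set A : AddSubgroup Q := Q₀.toAddSubgroup with hAdef
  have hAmem : ∀ x : Q, x ∈ A ↔ x ∈ Q₀ := fun x => Iff.rfl
  have hVfin : Finite (Q ⧸ A) := by
    rw [AddSubgroup.index_eq_card] at hQ₀
    exact (Nat.card_ne_zero.mp hQ₀).2
  let mkA : Q → Q ⧸ A := QuotientAddGroup.mk
  have mkA_eq : ∀ x y : Q, mkA x = mkA y ↔ x - y ∈ A := fun x y =>
    QuotientAddGroup.eq_iff_sub_mem
  -- the multiplicative monoid generated by the generators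
  set W : Submonoid Q := Submonoid.closure (↑s : Set Q) with hWdef
  -- every element of `Q` lies in the additive group generated by `W`
  have hgen : ∀ q : Q, q ∈ AddSubgroup.closure (W : Set Q) := by
    intro q
    have hq : q ∈ Subring.closure (↑s : Set Q) := by rw [hs]; trivial
    rwa [Subring.mem_closure_iff] at hq
  -- key: if all monomial left multiples of `x` are in `Q₀`, then all left multiples are
  have keyL : ∀ x : Q, (∀ w ∈ W, w * x ∈ A) → ∀ q : Q, q * x ∈ A := by
    intro x hx q
    induction hgen q using AddSubgroup.closure_induction with
    | mem w hw => exact hx w hw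
    | zero => rw [zero_mul]; exact A.zero_mem
    | add a b _ _ ha hb => rw [add_mul]; exact A.add_mem ha hb
    | neg a _ ha => rw [neg_mul]; exact A.neg_mem ha
  -- a section of the quotient map
  let σ : Q ⧸ A → Q := fun v => Quotient.out v
  have hσ : ∀ v : Q ⧸ A, mkA (σ v) = v := fun v => Quotient.out_eq' v
  -- fingerprint of a left multiplier
  let e : Q → (Q ⧸ A) × ((Q ⧸ A) → Q ⧸ A) := fun w => (mkA w, fun v => mkA (w * σ v))
  have claimA : ∀ w w' : Q, e w = e w' → ∀ z : Q, w * z - w' * z ∈ A := by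
    intro w w' hww z
    have h1 : mkA w = mkA w' := congrArg Prod.fst hww
    have h2 : ∀ v, mkA (w * σ v) = mkA (w' * σ v) := fun v =>
      congrFun (congrArg Prod.snd hww) v
    have hd : w - w' ∈ Q₀ := (hAmem _).mp ((mkA_eq w w').mp h1)
    have hz : z - σ (mkA z) ∈ Q₀ := (hAmem _).mp ((mkA_eq z (σ (mkA z))).mp (hσ (mkA z)).symm)
    have hterm1 : w * σ (mkA z) - w' * σ (mkA z) ∈ A := (mkA_eq _ _).mp (h2 (mkA z))
    have hterm2 : (w - w') * (z - σ (mkA z)) ∈ A := (hAmem _).mpr (Q₀.mul_mem hd hz)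
    have heq : w * z - w' * z =
        (w * σ (mkA z) - w' * σ (mkA z)) + (w - w') * (z - σ (mkA z)) := by
      noncomm_ring
    rw [heq]
    exact A.add_mem hterm1 hterm2
  -- the largest left ideal contained in Q₀
  let L : AddSubgroup Q :=
    { carrier := { x : Q | ∀ w ∈ W, w * x ∈ A }
      zero_mem' := by intro w _; rw [mul_zero]; exact A.zero_mem
      add_mem' := by
        intro a b ha hb w hw
        rw [mul_add]; exact A.add_mem (ha w hw) (hb w hw)
      neg_mem' := by
        intro a ha w hw
        rw [mul_neg]; exact A.neg_mem (ha w hw) }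
  have hLmem : ∀ x : Q, x ∈ L ↔ ∀ w ∈ W, w * x ∈ A := fun x => Iff.rfl
  have hLsub : ∀ x ∈ L, x ∈ Q₀ := by
    intro x hx
    have := hx 1 (one_mem W)
    rwa [one_mul] at this
  have hLleft : ∀ (q : Q), ∀ x ∈ L, q * x ∈ L := by
    intro q x hx w hw
    rw [← mul_assoc]
    exact keyL x hx (w * q)
  -- L has finite index
  have hLindex : L.index ≠ 0 := by
    let D := (Q ⧸ A) × ((Q ⧸ A) → Q ⧸ A)
    let u : D → Q := fun d => if h : ∃ w, w ∈ W ∧ e w = d then h.choose else 0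
    have hLiff : ∀ z : Q, z ∈ L ↔ ∀ d : D, u d * z ∈ A := by
      intro z
      constructor
      · intro hz d
        by_cases h : ∃ w, w ∈ W ∧ e w = d
        · have hspec := h.choose_spec
          simp only [u, dif_pos h]
          exact hz h.choose hspec.1
        · simp only [u, dif_neg h, zero_mul]
          exact A.zero_mem
      · intro hd w hw
        have hex : ∃ w', w' ∈ W ∧ e w' = e w := ⟨w, hw, rfl⟩
        have hspec := hex.choose_spec
        have hu : u (e w) = hex.choose := dif_pos hex
        have h1 : hex.choose * z ∈ A := by
          have := hd (e w); rwa [hu] at this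
        have h2 : hex.choose * z - w * z ∈ A := claimA _ _ hspec.2 z
        have : hex.choose * z - (hex.choose * z - w * z) ∈ A := A.sub_mem h1 h2
        simpa using this
    refine lewin_aux_index_ne_zero L (fun x => fun d : D => mkA (u d * x)) ?_
    intro x y
    constructor
    · intro hxy
      funext d
      refine (mkA_eq _ _).mpr ?_
      have := (hLiff (x - y)).mp hxy d
      rwa [mul_sub] at this
    · intro hf
      refine (hLiff (x - y)).mpr ?_
      intro d
      have : mkA (u d * x) = mkA (u d * y) := congrFun hf d
      have := (mkA_eq _ _).mp this
      rwa [← mul_sub] at this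
  -- the two-sided ideal
  let J : AddSubgroup Q :=
    { carrier := { x : Q | ∀ q : Q, x * q ∈ L }
      zero_mem' := by intro q; simp only [zero_mul]; exact L.zero_mem
      add_mem' := by
        intro a b ha hb q
        rw [add_mul]; exact L.add_mem (ha q) (hb q)
      neg_mem' := by
        intro a ha q
        rw [neg_mul]; exact L.neg_mem (ha q) }
  have hJmem : ∀ x : Q, x ∈ J ↔ ∀ q : Q, x * q ∈ L := fun x => Iff.rfl
  have hJL : ∀ x ∈ J, x ∈ L := by
    intro x hx
    have := hx 1
    rwa [mul_one] at this
  -- finiteness of Q ⧸ L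
  have hVLfin : Finite (Q ⧸ L) := by
    rw [AddSubgroup.index_eq_card] at hLindex
    exact (Nat.card_ne_zero.mp hLindex).2
  let mkL : Q → Q ⧸ L := QuotientAddGroup.mk
  have mkL_eq : ∀ x y : Q, mkL x = mkL y ↔ x - y ∈ L := fun x y =>
    QuotientAddGroup.eq_iff_sub_mem
  let σL : Q ⧸ L → Q := fun v => Quotient.out v
  have hσL : ∀ v : Q ⧸ L, mkL (σL v) = v := fun v => Quotient.out_eq' v
  have hJindex : J.index ≠ 0 := by
    refine lewin_aux_index_ne_zero J (fun x => fun v : Q ⧸ L => mkL (x * σL v)) ?_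
    intro x y
    constructor
    · intro hxy
      funext v
      refine (mkL_eq _ _).mpr ?_
      have := hxy (σL v)
      rwa [sub_mul] at this
    · intro hf q
      have hq : q - σL (mkL q) ∈ L := (mkL_eq q (σL (mkL q))).mp (hσL (mkL q)).symm
      have h1 : (x - y) * σL (mkL q) ∈ L := by
        have := (mkL_eq _ _).mp (congrFun hf (mkL q))
        rwa [← sub_mul] at this
      have h2 : (x - y) * (q - σL (mkL q)) ∈ L := hLleft (x - y) _ hq
      have : (x - y) * σL (mkL q) + (x - y) * (q - σL (mkL q)) ∈ L := L.add_mem h1 h2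
      rwa [← mul_add, add_sub_cancel] at this
  refine ⟨J, ?_, ?_, hJindex⟩
  · intro x hx
    exact hLsub x (hJL x hx)
  · intro q x hx
    constructor
    · intro w
      rw [mul_assoc]
      exact hLleft q _ (hx w)
    · intro w
      rw [mul_assoc]
      exact hx (q * w)
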